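/- arXiv:1105.5413 — 3 statements merged into one kernel-verified Lean document; each statement's English description precedes it below -/
import Mathlib

section
/- If W and W' are subsets of ℤ^d each possessing an affine stratification, then W ∩ W' possesses an affine stratification. -/
open Pointwise

/-- A finitely generated module over an affine semigroup: `W = F + A` with `F` finite and
`A` a finitely generated submonoid of `ℤ^d`. -/
def IsFGModule {d : ℕ} (W : Set (Fin d → ℤ)) : Prop :=
  ∃ (F : Set (Fin d → ℤ)) (A : AddSubmonoid (Fin d → ℤ)),
    F.Finite ∧ A.FG ∧ W = F + (A : Set (Fin d → ℤ))

/-- An affine stratification: a finite partition into finitely generated modules over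
affine semigroups. -/
def HasAffineStratification {d : ℕ} (W : Set (Fin d → ℤ)) : Prop :=
  ∃ (r : ℕ) (Wi : Fin r → Set (Fin d → ℤ)),
    Set.univ.PairwiseDisjoint Wi ∧ W = ⋃ i, Wi i ∧ ∀ i, IsFGModule (Wi i)


def smulSumHom {d k : ℕ} (v : Fin k → (Fin d → ℤ)) : (Fin k → ℕ) →+ (Fin d → ℤ) where
  toFun m := ∑ i, m i • v i
  map_zero' := by simp
  map_add' x y := by simp [add_smul, Finset.sum_add_distrib]

lemma closure_range_eq {d k : ℕ} (v : Fin k → (Fin d → ℤ)) :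
    AddSubmonoid.closure (Set.range v) = AddMonoidHom.mrange (smulSumHom v) := by
  apply le_antisymm
  · rw [AddSubmonoid.closure_le]
    rintro _ ⟨i, rfl⟩
    refine ⟨Pi.single i 1, ?_⟩
    show ∑ j, Pi.single i 1 j • v j = v i
    rw [Finset.sum_eq_single i]
    · simp
    · intro b _ hb; simp [Pi.single_apply, hb]
    · simp
  · intro x hx
    obtain ⟨m, rfl⟩ := AddMonoidHom.mem_mrange.mp hx
    show ∑ i, m i • v i ∈ AddSubmonoid.closure (Set.range v)
    exact AddSubmonoid.sum_mem _ fun i _ =>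
      AddSubmonoid.nsmul_mem _ (AddSubmonoid.subset_closure (Set.mem_range_self i)) _

lemma exists_minimal_le {n : ℕ} (S : Set (Fin n → ℕ)) {x : Fin n → ℕ} (hx : x ∈ S) :
    ∃ e ∈ S, e ≤ x ∧ ∀ y ∈ S, y ≤ e → y = e := by
  obtain ⟨N, hN⟩ : ∃ N, ∑ i, x i = N := ⟨_, rfl⟩
  induction N using Nat.strong_induction_on generalizing x with
  | _ N ih =>
    by_cases hmin : ∀ y ∈ S, y ≤ x → y = x
    · exact ⟨x, hx, le_refl x, hmin⟩
    · push_neg at hmin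
      obtain ⟨y, hyS, hyx, hne⟩ := hmin
      have hsum : ∑ i, y i < N := by
        subst hN
        refine Finset.sum_lt_sum (fun i _ => hyx i) ?_
        obtain ⟨i, hi⟩ := Function.ne_iff.mp hne
        exact ⟨i, Finset.mem_univ i, lt_of_le_of_ne (hyx i) hi⟩
      obtain ⟨e, heS, hey, hemin⟩ := ih _ hsum hyS rfl
      exact ⟨e, heS, le_trans hey hyx, hemin⟩

lemma finite_minimals {n : ℕ} (S : Set (Fin n → ℕ)) :
    {e | e ∈ S ∧ ∀ y ∈ S, y ≤ e → y = e}.Finite := by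
  have h : IsAntichain (· ≤ ·) {e | e ∈ S ∧ ∀ y ∈ S, y ≤ e → y = e} := by
    intro a ha b hb hne hle
    exact hne (hb.2 a ha.1 hle)
  exact h.finite_of_partiallyWellOrderedOn
    (Set.isPWO_of_wellQuasiOrderedLE _)

/-- pointwise: if `e ≤ x` then `e + (x - e) = x` in `Fin n → ℕ`. -/
lemma add_sub_of_le' {n : ℕ} {e x : Fin n → ℕ} (h : e ≤ x) : e + (x - e) = x :=
  funext fun i => Nat.add_sub_cancel' (h i)

/-- Module decomposition of a set `S` over a submonoid `K`. -/
lemma decomp {n : ℕ} (S : Set (Fin n → ℕ)) (K : AddSubmonoid (Fin n → ℕ))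
    (hadd : ∀ x ∈ S, ∀ k ∈ K, x + k ∈ S)
    (hsub : ∀ x ∈ S, ∀ e ∈ S, e ≤ x → x - e ∈ K) :
    ∃ E : Set (Fin n → ℕ), E.Finite ∧ E ⊆ S ∧ S = E + (K : Set (Fin n → ℕ)) := by
  refine ⟨{e | e ∈ S ∧ ∀ y ∈ S, y ≤ e → y = e}, finite_minimals S, fun e he => he.1, ?_⟩
  ext x
  constructor
  · intro hx
    obtain ⟨e, heS, hle, hmin⟩ := exists_minimal_le S hx
    exact ⟨e, ⟨heS, hmin⟩, x - e, hsub x hx e heS hle, add_sub_of_le' hle⟩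
  · rintro ⟨e, ⟨heS, _⟩, k, hk, rfl⟩
    exact hadd e heS k hk

/-- Gordan-type lemma: a submonoid of `ℕ^n` closed under subtraction of smaller members
is finitely generated. -/
lemma gordan {n : ℕ} (K : AddSubmonoid (Fin n → ℕ))
    (hsub : ∀ x ∈ K, ∀ e ∈ K, e ≤ x → x - e ∈ K) : K.FG := by
  set S : Set (Fin n → ℕ) := (K : Set (Fin n → ℕ)) \ {0} with hS
  set E := {e | e ∈ S ∧ ∀ y ∈ S, y ≤ e → y = e} with hE
  have hEfin : E.Finite := finite_minimals S
  refine ⟨hEfin.toFinset, le_antisymm ?_ ?_⟩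
  · rw [AddSubmonoid.closure_le]
    intro e he
    rw [Set.Finite.coe_toFinset] at he
    exact he.1.1
  · intro x hx
    obtain ⟨N, hN⟩ : ∃ N, ∑ i, x i = N := ⟨_, rfl⟩
    induction N using Nat.strong_induction_on generalizing x with
    | _ N ih =>
      by_cases hx0 : x = 0
      · subst hx0; exact AddSubmonoid.zero_mem _
      · have hxS : x ∈ S := ⟨hx, hx0⟩
        obtain ⟨e, heS, hle, hmin⟩ := exists_minimal_le S hxS
        have heE : e ∈ E := ⟨heS, hmin⟩
        have hxeK : x - e ∈ K := hsub x hx e heS.1 hle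
        have he0 : e ≠ 0 := heS.2
        have hsum : ∑ i, (x - e) i < N := by
          subst hN
          refine Finset.sum_lt_sum (fun i _ => Nat.sub_le _ _) ?_
          obtain ⟨i, hi⟩ := Function.ne_iff.mp he0
          rw [Pi.zero_apply] at hi
          have hxi := hle i
          have he' : 0 < e i := Nat.pos_of_ne_zero hi
          exact ⟨i, Finset.mem_univ i, by
            simp only [Pi.sub_apply]
            exact Nat.sub_lt (lt_of_lt_of_le he' hxi) he'⟩
        have hrec := ih _ hsum hxeK rfl
        have : e + (x - e) = x := add_sub_of_le' hle
        rw [← this]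
        exact AddSubmonoid.add_mem _
          (AddSubmonoid.subset_closure (by rw [Set.Finite.coe_toFinset]; exact heE)) hrec

def leftHom (k k' : ℕ) : (Fin (k + k') → ℕ) →+ (Fin k → ℕ) where
  toFun x := x ∘ Fin.castAdd k'
  map_zero' := rfl
  map_add' _ _ := rfl

def rightHom (k k' : ℕ) : (Fin (k + k') → ℕ) →+ (Fin k' → ℕ) where
  toFun x := x ∘ Fin.natAdd k
  map_zero' := rfl
  map_add' _ _ := rfl

lemma map_sub_of_le {n d : ℕ} (φ : (Fin n → ℕ) →+ (Fin d → ℤ)) {e x : Fin n → ℕ}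
    (h : e ≤ x) : φ (x - e) = φ x - φ e := by
  have hx : φ e + φ (x - e) = φ x := by rw [← map_add, add_sub_of_le' h]
  exact eq_sub_of_add_eq' hx

lemma isFGModule_inter {d : ℕ} {W W' : Set (Fin d → ℤ)} (h : IsFGModule W)
    (h' : IsFGModule W') : IsFGModule (W ∩ W') := by
  obtain ⟨F, A, hF, hA, rfl⟩ := h
  obtain ⟨F', A', hF', hA', rfl⟩ := h'
  obtain ⟨T, hT⟩ := hA
  obtain ⟨T', hT'⟩ := hA'
  set k := T.card with hk
  set k' := T'.card with hk'
  set a : Fin k → (Fin d → ℤ) := fun i => (T.equivFin.symm i : Fin d → ℤ) with ha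
  set a' : Fin k' → (Fin d → ℤ) := fun i => (T'.equivFin.symm i : Fin d → ℤ) with ha'
  have hrange : Set.range a = (T : Set (Fin d → ℤ)) := by
    ext z
    constructor
    · rintro ⟨i, rfl⟩; exact (T.equivFin.symm i).2
    · intro hz; exact ⟨T.equivFin ⟨z, hz⟩, by simp [ha]⟩
  have hrange' : Set.range a' = (T' : Set (Fin d → ℤ)) := by
    ext z
    constructor
    · rintro ⟨i, rfl⟩; exact (T'.equivFin.symm i).2
    · intro hz; exact ⟨T'.equivFin ⟨z, hz⟩, by simp [ha']⟩
  have hA2 : AddMonoidHom.mrange (smulSumHom a) = A := by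
    rw [← closure_range_eq, hrange, hT]
  have hA2' : AddMonoidHom.mrange (smulSumHom a') = A' := by
    rw [← closure_range_eq, hrange', hT']
  set φ : (Fin (k + k') → ℕ) →+ (Fin d → ℤ) := (smulSumHom a).comp (leftHom k k') with hφ
  set φ' : (Fin (k + k') → ℕ) →+ (Fin d → ℤ) := (smulSumHom a').comp (rightHom k k') with hφ'
  set K : AddSubmonoid (Fin (k + k') → ℕ) :=
    { carrier := {x | φ x = φ' x}
      zero_mem' := by simp
      add_mem' := fun {p} {q} hp hq => by
        have hp' : φ p = φ' p := hp
        have hq' : φ q = φ' q := hq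
        show φ (p + q) = φ' (p + q)
        rw [map_add, map_add, hp', hq'] } with hK
  have hKmem : ∀ x, x ∈ K ↔ φ x = φ' x := fun x => Iff.rfl
  have hKsub : ∀ x ∈ K, ∀ e ∈ K, e ≤ x → x - e ∈ K := by
    intro x hx e he hle
    rw [hKmem] at *
    rw [map_sub_of_le φ hle, map_sub_of_le φ' hle, hx, he]
  set S : (Fin d → ℤ) × (Fin d → ℤ) → Set (Fin (k + k') → ℕ) :=
    fun p => {x | p.1 + φ x = p.2 + φ' x} with hSdef
  have hadd : ∀ p, ∀ x ∈ S p, ∀ c ∈ K, x + c ∈ S p := by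
    intro p x hx c hc
    have hx' : p.1 + φ x = p.2 + φ' x := hx
    have hc' : φ c = φ' c := hc
    show p.1 + φ (x + c) = p.2 + φ' (x + c)
    rw [map_add, map_add, ← add_assoc, ← add_assoc, hx', hc']
  have hsub : ∀ p, ∀ x ∈ S p, ∀ e ∈ S p, e ≤ x → x - e ∈ K := by
    intro p x hx e he hle
    have hx' : p.1 + φ x = p.2 + φ' x := hx
    have he' : p.1 + φ e = p.2 + φ' e := he
    rw [hKmem, map_sub_of_le φ hle, map_sub_of_le φ' hle]
    have : φ x - φ e = φ' x - φ' e := by linear_combination hx' - he'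
    exact this
  choose E hEfin hES using fun p => decomp (S p) K (hadd p) (hsub p)
  set N : AddSubmonoid (Fin d → ℤ) := K.map φ with hN
  have hNFG : N.FG := AddSubmonoid.FG.map (gordan K hKsub) φ
  set Ebig : Set (Fin d → ℤ) := ⋃ p ∈ F ×ˢ F', (fun x => p.1 + φ x) '' (E p) with hEbig
  have hEbigFin : Ebig.Finite :=
    Set.Finite.biUnion (hF.prod hF') fun p _ => (hEfin p).image _
  refine ⟨Ebig, N, hEbigFin, hNFG, ?_⟩
  ext z
  constructor
  · rintro ⟨hzW, hzW'⟩
    obtain ⟨f, hf, g, hg, hfg0⟩ := hzW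
    obtain ⟨f', hf', g', hg', hfg0'⟩ := hzW'
    have hfg : f + g = z := hfg0
    have hfg' : f' + g' = z := hfg0'
    obtain ⟨m, hm⟩ := AddMonoidHom.mem_mrange.mp (show g ∈ AddMonoidHom.mrange (smulSumHom a) by rw [hA2]; exact hg)
    obtain ⟨m', hm'⟩ := AddMonoidHom.mem_mrange.mp (show g' ∈ AddMonoidHom.mrange (smulSumHom a') by rw [hA2']; exact hg')
    set x : Fin (k + k') → ℕ := Fin.append m m' with hxdef
    have hxl : φ x = g := by
      rw [hφ, AddMonoidHom.comp_apply, ← hm]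
      congr 1
      exact funext fun i => Fin.append_left m m' i
    have hxr : φ' x = g' := by
      rw [hφ', AddMonoidHom.comp_apply, ← hm']
      congr 1
      exact funext fun i => Fin.append_right m m' i
    have hxS : x ∈ S (f, f') := by
      show f + φ x = f' + φ' x
      rw [hxl, hxr, hfg, hfg']
    rw [(hES (f, f')).2] at hxS
    obtain ⟨e, he, c, hc, hec0⟩ := hxS
    have hec : e + c = x := hec0
    refine ⟨f + φ e, ?_, φ c, ?_, ?_⟩
    · exact Set.mem_biUnion (show (f, f') ∈ F ×ˢ F' from ⟨hf, hf'⟩) ⟨e, he, rfl⟩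
    · exact ⟨c, hc, rfl⟩
    · show f + φ e + φ c = z
      rw [add_assoc, ← map_add, hec, hxl, hfg]
  · rintro ⟨w, hw, nu, hnu, rfl⟩
    obtain ⟨p, hp, hw2⟩ := Set.mem_iUnion₂.mp hw
    obtain ⟨e, he, hew⟩ := hw2
    have hew' : p.1 + φ e = w := hew
    subst hew'
    obtain ⟨c, hc, rfl⟩ := AddSubmonoid.mem_map.mp hnu
    have heS : e ∈ S p := (hES p).1 he
    have hxS : e + c ∈ S p := hadd p e heS c hc
    have hxS' : p.1 + φ (e + c) = p.2 + φ' (e + c) := hxS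
    have hz : p.1 + φ e + φ c = p.1 + φ (e + c) := by rw [map_add, add_assoc]
    constructor
    · refine ⟨p.1, hp.1, φ (e + c), ?_, show p.1 + φ (e + c) = p.1 + φ e + φ c from hz.symm⟩
      show φ (e + c) ∈ (A : Set (Fin d → ℤ))
      rw [← hA2]
      exact ⟨leftHom k k' (e + c), rfl⟩
    · refine ⟨p.2, hp.2, φ' (e + c), ?_,
        show p.2 + φ' (e + c) = p.1 + φ e + φ c from (hz.trans hxS').symm⟩
      show φ' (e + c) ∈ (A' : Set (Fin d → ℤ))
      rw [← hA2']
      exact ⟨rightHom k k' (e + c), rfl⟩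


/-- If `W` and `W'` possess affine stratifications, so does `W ∩ W'`. -/
theorem hasAffineStratification_inter {d : ℕ} (W W' : Set (Fin d → ℤ))
    (hW : HasAffineStratification W) (hW' : HasAffineStratification W') :
    HasAffineStratification (W ∩ W') := by
  obtain ⟨r, Wi, hdisj, hWu, hFG⟩ := hW
  obtain ⟨r', Wi', hdisj', hWu', hFG'⟩ := hW'
  refine ⟨r * r',
    fun i => Wi (finProdFinEquiv.symm i).1 ∩ Wi' (finProdFinEquiv.symm i).2, ?_, ?_, ?_⟩
  · intro i _ j _ hij
    have hpq : (finProdFinEquiv.symm i) ≠ (finProdFinEquiv.symm j) :=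
      fun h => hij (finProdFinEquiv.symm.injective h)
    rcases (Prod.ext_iff.not.mp hpq |> fun h => not_and_or.mp h) with h1 | h2
    · exact Disjoint.mono Set.inter_subset_left Set.inter_subset_left
        (hdisj (Set.mem_univ _) (Set.mem_univ _) h1)
    · exact Disjoint.mono Set.inter_subset_right Set.inter_subset_right
        (hdisj' (Set.mem_univ _) (Set.mem_univ _) h2)
  · rw [hWu, hWu']
    ext z
    simp only [Set.mem_inter_iff, Set.mem_iUnion]
    constructor
    · rintro ⟨⟨a, ha⟩, ⟨b, hb⟩⟩
      refine ⟨finProdFinEquiv (a, b), ?_⟩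
      simp only [Equiv.symm_apply_apply]
      exact ⟨ha, hb⟩
    · rintro ⟨i, hi1, hi2⟩
      exact ⟨⟨_, hi1⟩, ⟨_, hi2⟩⟩
  · intro i
    exact isFGModule_inter (hFG _) (hFG' _)
end

section
/- The intersection of a translate a₁ + A₁ of a normal affine semigroup A₁ with a translate a₂ + A₂ of a normal affine semigroup A₂ in ℤ^d is a finitely generated module over an affine semigroup (in particular it possesses an affine stratification). -/
open Pointwise

/-- A normal affine semigroup: finitely generated and saturated in the group it
generates (equivalently, the intersection of a rational cone with a lattice). -/
def IsNormalAffineSemigroup {d : ℕ} (A : AddSubmonoid (Fin d → ℤ)) : Prop :=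
  A.FG ∧ ∀ x : Fin d → ℤ, x ∈ AddSubgroup.closure (A : Set (Fin d → ℤ)) →
    (∃ n : ℕ, 0 < n ∧ n • x ∈ A) → x ∈ A

section Aux
variable {ι : Type*} [Fintype ι]

lemma aux_sum_lt_of_le_of_ne {a b : ι → ℕ} (hab : a ≤ b) (hne : a ≠ b) :
    ∑ i, a i < ∑ i, b i := by
  obtain ⟨j, hj⟩ := Function.ne_iff.mp hne
  exact Finset.sum_lt_sum (fun i _ => hab i) ⟨j, Finset.mem_univ j, lt_of_le_of_ne (hab j) hj⟩

lemma aux_exists_minimal_le (S : Set (ι → ℕ)) (s : ι → ℕ) (hs : s ∈ S) :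
    ∃ m ∈ S, m ≤ s ∧ ∀ y ∈ S, y ≤ m → y = m := by
  suffices h : ∀ n (s : ι → ℕ), s ∈ S → ∑ i, s i ≤ n →
      ∃ m ∈ S, m ≤ s ∧ ∀ y ∈ S, y ≤ m → y = m from h _ s hs le_rfl
  intro n
  induction n with
  | zero =>
    intro s hs hsum
    refine ⟨s, hs, le_rfl, fun y hy hys => ?_⟩
    by_contra hne
    exact absurd (lt_of_lt_of_le (aux_sum_lt_of_le_of_ne hys hne) hsum) (Nat.not_lt_zero _)
  | succ n ih =>
    intro s hs hsum
    by_cases hmin : ∀ y ∈ S, y ≤ s → y = s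
    · exact ⟨s, hs, le_rfl, hmin⟩
    · push_neg at hmin
      obtain ⟨y, hy, hys, hne⟩ := hmin
      have hlt := aux_sum_lt_of_le_of_ne hys hne
      obtain ⟨m, hm, hmy, hmmin⟩ := ih y hy (by omega)
      exact ⟨m, hm, hmy.trans hys, hmmin⟩

lemma aux_minimal_finite (S : Set (ι → ℕ)) :
    {m | m ∈ S ∧ ∀ y ∈ S, y ≤ m → y = m}.Finite := by
  refine IsAntichain.finite_of_partiallyWellOrderedOn
    (fun a ha b hb hne hle => hne (hb.2 a ha.1 hle)) ?_
  exact Set.isPWO_of_wellQuasiOrderedLE _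

end Aux

lemma isFGModule_inter_s6 {d : ℕ} (A₁ A₂ : AddSubmonoid (Fin d → ℤ))
    (hfg₁ : A₁.FG) (hfg₂ : A₂.FG) (a₁ a₂ : Fin d → ℤ) :
    IsFGModule ((a₁ +ᵥ (A₁ : Set (Fin d → ℤ))) ∩ (a₂ +ᵥ (A₂ : Set (Fin d → ℤ)))) := by
  classical
  obtain ⟨S₁, hS₁⟩ := hfg₁
  obtain ⟨S₂, hS₂⟩ := hfg₂
  set ι := ({x // x ∈ S₁} ⊕ {x // x ∈ S₂}) with hι
  set ψ : (ι → ℕ) → (Fin d → ℤ) :=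
    fun c => ∑ i : {x // x ∈ S₁}, c (Sum.inl i) • (i : Fin d → ℤ) with hψ
  set χ : (ι → ℕ) → (Fin d → ℤ) :=
    fun c => ∑ j : {x // x ∈ S₂}, c (Sum.inr j) • (j : Fin d → ℤ) with hχ
  have ψadd : ∀ c c', ψ (c + c') = ψ c + ψ c' := fun c c' => by
    simp only [hψ, Pi.add_apply, add_smul, Finset.sum_add_distrib]
  have χadd : ∀ c c', χ (c + c') = χ c + χ c' := fun c c' => by
    simp only [hχ, Pi.add_apply, add_smul, Finset.sum_add_distrib]
  have ψ0 : ψ 0 = 0 := by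
    simp only [hψ, Pi.zero_apply, zero_smul, Finset.sum_const_zero]
  have χ0 : χ 0 = 0 := by
    simp only [hχ, Pi.zero_apply, zero_smul, Finset.sum_const_zero]
  -- membership in A₁ via coefficient vectors
  have memA₁ : ∀ x : Fin d → ℤ, x ∈ A₁ ↔
      ∃ u : {y // y ∈ S₁} → ℕ, ∑ i, u i • (i : Fin d → ℤ) = x := by
    intro x
    rw [← hS₁, ← Submodule.span_nat_eq_addSubmonoidClosure, Submodule.mem_toAddSubmonoid,
      Submodule.mem_span_finset]
    constructor
    · rintro ⟨f, -, rfl⟩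
      exact ⟨fun i => f i, (Finset.sum_coe_sort S₁ fun i => f i • i)⟩
    · rintro ⟨u, rfl⟩
      refine ⟨fun y => if hy : y ∈ S₁ then u ⟨y, hy⟩ else 0,
        fun y hy => by by_contra h; exact hy (dif_neg h), ?_⟩
      rw [← Finset.sum_coe_sort S₁ (fun y => (if hy : y ∈ S₁ then u ⟨y, hy⟩ else 0) • y)]
      exact Finset.sum_congr rfl fun i _ => by rw [dif_pos i.2]
  have memA₂ : ∀ x : Fin d → ℤ, x ∈ A₂ ↔
      ∃ u : {y // y ∈ S₂} → ℕ, ∑ i, u i • (i : Fin d → ℤ) = x := by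
    intro x
    rw [← hS₂, ← Submodule.span_nat_eq_addSubmonoidClosure, Submodule.mem_toAddSubmonoid,
      Submodule.mem_span_finset]
    constructor
    · rintro ⟨f, -, rfl⟩
      exact ⟨fun i => f i, (Finset.sum_coe_sort S₂ fun i => f i • i)⟩
    · rintro ⟨u, rfl⟩
      refine ⟨fun y => if hy : y ∈ S₂ then u ⟨y, hy⟩ else 0,
        fun y hy => by by_contra h; exact hy (dif_neg h), ?_⟩
      rw [← Finset.sum_coe_sort S₂ (fun y => (if hy : y ∈ S₂ then u ⟨y, hy⟩ else 0) • y)]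
      exact Finset.sum_congr rfl fun i _ => by rw [dif_pos i.2]
  have ψmem : ∀ c, ψ c ∈ A₁ := fun c => (memA₁ _).mpr ⟨fun i => c (Sum.inl i), rfl⟩
  have χmem : ∀ c, χ c ∈ A₂ := fun c => (memA₂ _).mpr ⟨fun i => c (Sum.inr i), rfl⟩
  -- the solution set and homogeneous solution monoid
  set Sol : Set (ι → ℕ) := {c | a₁ + ψ c = a₂ + χ c} with hSolDef
  set MinSol : Set (ι → ℕ) := {m | m ∈ Sol ∧ ∀ y ∈ Sol, y ≤ m → y = m} with hMinSol
  set ψhom : (ι → ℕ) →+ (Fin d → ℤ) :=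
    { toFun := ψ, map_zero' := ψ0, map_add' := ψadd } with hψhom
  set HomM : AddSubmonoid (ι → ℕ) :=
    { carrier := {c | ψ c = χ c}
      add_mem' := fun {a} {b} ha hb => by
        simp only [Set.mem_setOf_eq] at *
        rw [ψadd, χadd, ha, hb]
      zero_mem' := by simp only [Set.mem_setOf_eq, ψ0, χ0] } with hHomM
  have memHom : ∀ c, c ∈ HomM ↔ ψ c = χ c := fun c => Iff.rfl
  -- subtraction lemmas
  have subψ : ∀ {m c : ι → ℕ}, m ≤ c → ψ c = ψ (c - m) + ψ m := by
    intro m c hmc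
    have : (c - m) + m = c := funext fun i => Nat.sub_add_cancel (hmc i)
    rw [← ψadd, this]
  have subχ : ∀ {m c : ι → ℕ}, m ≤ c → χ c = χ (c - m) + χ m := by
    intro m c hmc
    have : (c - m) + m = c := funext fun i => Nat.sub_add_cancel (hmc i)
    rw [← χadd, this]
  -- HomM is finitely generated
  have homFG : HomM.FG := by
    set HS : Set (ι → ℕ) := (HomM : Set (ι → ℕ)) \ {0} with hHS
    set MinHom : Set (ι → ℕ) := {m | m ∈ HS ∧ ∀ y ∈ HS, y ≤ m → y = m} with hMinHom
    have hfin : MinHom.Finite := aux_minimal_finite HS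
    refine ⟨hfin.toFinset, le_antisymm ?_ ?_⟩
    · rw [AddSubmonoid.closure_le]
      intro m hm
      rw [Set.Finite.coe_toFinset] at hm
      exact hm.1.1
    · intro c hc
      suffices h : ∀ n (c : ι → ℕ), c ∈ HomM → ∑ i, c i ≤ n →
          c ∈ AddSubmonoid.closure (hfin.toFinset : Set (ι → ℕ)) from h _ c hc le_rfl
      intro n
      induction n with
      | zero =>
        intro c hc hsum
        have : c = 0 := funext fun i => Nat.le_zero.mp
          (le_trans (Finset.single_le_sum (fun j _ => Nat.zero_le (c j)) (Finset.mem_univ i)) hsum)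
        rw [this]
        exact zero_mem _
      | succ n ih =>
        intro c hc hsum
        by_cases hc0 : c = 0
        · rw [hc0]; exact zero_mem _
        · have hcS : c ∈ HS := ⟨hc, hc0⟩
          obtain ⟨m, hm, hmc, hmmin⟩ := aux_exists_minimal_le HS c hcS
          have hmemMin : m ∈ MinHom := ⟨hm, hmmin⟩
          have hm0 : m ≠ 0 := hm.2
          have hsub : c - m ∈ HomM := by
            rw [memHom]
            have h1 : ψ (c - m) = ψ c - ψ m := eq_sub_of_add_eq (subψ hmc).symm
            have h2 : χ (c - m) = χ c - χ m := eq_sub_of_add_eq (subχ hmc).symm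
            rw [h1, h2, (memHom c).mp hc, (memHom m).mp hm.1]
          have hsumlt : ∑ i, (c - m) i ≤ n := by
            have hds : ∑ i, ((c - m) i + m i) = ∑ i, c i :=
              Finset.sum_congr rfl fun i _ => Nat.sub_add_cancel (hmc i)
            rw [Finset.sum_add_distrib] at hds
            have hmpos : 0 < ∑ i, m i := by
              rcases Nat.eq_zero_or_pos (∑ i, m i) with hz | hp
              · exact absurd (funext fun i => Nat.le_zero.mp
                  (le_trans (Finset.single_le_sum (fun j _ => Nat.zero_le (m j))
                    (Finset.mem_univ i)) hz.le)) hm0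
              · exact hp
            omega
          have hrec := ih (c - m) hsub hsumlt
          have hmin' : m ∈ AddSubmonoid.closure (hfin.toFinset : Set (ι → ℕ)) :=
            AddSubmonoid.subset_closure (by rw [Set.Finite.coe_toFinset]; exact hmemMin)
          have := add_mem hrec hmin'
          rwa [show (c - m) + m = c from funext fun i => Nat.sub_add_cancel (hmc i)] at this
  -- the module structure
  set A : AddSubmonoid (Fin d → ℤ) := HomM.map ψhom with hA
  have hAfg : A.FG := AddSubmonoid.FG.map homFG ψhom
  have hMinFin : MinSol.Finite := aux_minimal_finite Sol
  set F : Set (Fin d → ℤ) := (fun s => a₁ + ψ s) '' MinSol with hF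
  have hFfin : F.Finite := hMinFin.image _
  refine ⟨F, A, hFfin, hAfg, ?_⟩
  ext z
  simp only [Set.mem_inter_iff, Set.mem_vadd_set, vadd_eq_add]
  constructor
  · rintro ⟨⟨x₁, hx₁, rfl⟩, ⟨x₂, hx₂, hz₂⟩⟩
    obtain ⟨u, hu⟩ := (memA₁ x₁).mp hx₁
    obtain ⟨t, ht⟩ := (memA₂ x₂).mp hx₂
    set c : ι → ℕ := Sum.elim u t with hc
    have hψc : ψ c = x₁ := hu
    have hχc : χ c = x₂ := ht
    have hcSol : c ∈ Sol := by
      rw [hSolDef, Set.mem_setOf_eq, hψc, hχc, hz₂]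
    obtain ⟨s₀, hs₀, hs₀c, hs₀min⟩ := aux_exists_minimal_le Sol c hcSol
    have hs₀Min : s₀ ∈ MinSol := ⟨hs₀, hs₀min⟩
    set h := c - s₀ with hh
    have hdecψ : ψ c = ψ h + ψ s₀ := subψ hs₀c
    have hdecχ : χ c = χ h + χ s₀ := subχ hs₀c
    have hSolC : a₁ + ψ c = a₂ + χ c := hcSol
    have hSolS : a₁ + ψ s₀ = a₂ + χ s₀ := hs₀
    have hhHom : h ∈ HomM := by
      rw [memHom]
      have := hSolC
      rw [hdecψ, hdecχ] at this
      linear_combination this - hSolS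
    rw [Set.mem_add]
    refine ⟨a₁ + ψ s₀, ⟨s₀, hs₀Min, rfl⟩, ψ h, ⟨h, hhHom, rfl⟩, ?_⟩
    rw [← hψc, hdecψ]
    ring
  · rintro h
    rw [Set.mem_add] at h
    obtain ⟨f, hf, b, hb, rfl⟩ := h
    obtain ⟨s₀, hs₀Min, rfl⟩ := hf
    obtain ⟨hhh, hhomMem, rfl⟩ := hb
    have hψχ : ψ hhh = χ hhh := hhomMem
    have hSolS : a₁ + ψ s₀ = a₂ + χ s₀ := hs₀Min.1
    constructor
    · refine ⟨ψ (s₀ + hhh), ψmem _, ?_⟩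
      rw [ψadd]
      show a₁ + (ψ s₀ + ψ hhh) = a₁ + ψ s₀ + ψhom hhh
      have hrfl : (ψhom hhh : Fin d → ℤ) = ψ hhh := rfl
      rw [hrfl]
      ring
    · refine ⟨χ (s₀ + hhh), χmem _, ?_⟩
      rw [χadd]
      show a₂ + (χ s₀ + χ hhh) = a₁ + ψ s₀ + ψhom hhh
      have : (ψhom hhh : Fin d → ℤ) = ψ hhh := rfl
      rw [this, hψχ]
      linear_combination -hSolS

/-- The intersection of translates of two normal affine semigroups is a
finitely generated module over an affine semigroup; in particular it possesses an affine
stratification. -/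
theorem inter_translates_normal_isFGModule {d : ℕ}
    (A₁ A₂ : AddSubmonoid (Fin d → ℤ))
    (h₁ : IsNormalAffineSemigroup A₁) (h₂ : IsNormalAffineSemigroup A₂)
    (a₁ a₂ : Fin d → ℤ) :
    IsFGModule ((a₁ +ᵥ (A₁ : Set (Fin d → ℤ))) ∩ (a₂ +ᵥ (A₂ : Set (Fin d → ℤ)))) ∧
    HasAffineStratification
      ((a₁ +ᵥ (A₁ : Set (Fin d → ℤ))) ∩ (a₂ +ᵥ (A₂ : Set (Fin d → ℤ)))) := by
  have hmod := isFGModule_inter_s6 A₁ A₂ h₁.1 h₂.1 a₁ a₂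
  refine ⟨hmod, 1, fun _ => (a₁ +ᵥ (A₁ : Set (Fin d → ℤ))) ∩ (a₂ +ᵥ (A₂ : Set (Fin d → ℤ))),
    fun i _ j _ hij => absurd (Subsingleton.elim i j) hij,
    (Set.iUnion_const _).symm, fun _ => hmod⟩
end

section
/- The set of integer points of a rational convex polyhedron in ℝ^d intersected with a coset of a subgroup of ℤ^d is a finitely generated module over an affine semigroup, namely over the semigroup of lattice points of the recession cone. -/
open Pointwise

/-- Dickson's lemma, finite-basis form: every subset of `ℕ^n` has a finite subset
below every element. -/
lemma dickson_basis {n : ℕ} (T : Set (Fin n → ℕ)) :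
    ∃ B ⊆ T, B.Finite ∧ ∀ t ∈ T, ∃ b ∈ B, b ≤ t := by
  haveI : IsWellOrder ℕ (· < ·) := ⟨⟩
  have hpwo : T.IsPWO := Set.partiallyWellOrderedOn_of_wellQuasiOrdered wellQuasiOrdered_le T
  set B : Set (Fin n → ℕ) := {x ∈ T | ∀ y ∈ T, y ≤ x → x ≤ y} with hBdef
  have hBsub : B ⊆ T := fun x hx => hx.1
  refine ⟨B, hBsub, ?_, ?_⟩
  · refine IsAntichain.finite_of_partiallyWellOrderedOn (r := (· ≤ ·))
      ?_ (hpwo.mono hBsub)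
    intro x hx y hy hxy hle
    exact hxy (le_antisymm hle (hy.2 x hx.1 hle))
  · intro t ht
    have hwf : WellFounded fun (x y : T) => (x : Fin n → ℕ) < y := hpwo.isWF
    obtain ⟨m, hm, hmin⟩ := hwf.has_min {x : T | (x : Fin n → ℕ) ≤ t}
      ⟨⟨t, ht⟩, le_refl t⟩
    refine ⟨(m : Fin n → ℕ), ⟨m.2, ?_⟩, hm⟩
    intro y hy hym
    have hyt : y ≤ t := le_trans hym hm
    by_contra hmy
    exact hmin ⟨y, hy⟩ hyt (lt_of_le_of_ne hym (fun h => hmy (le_of_eq h.symm)))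

/-- The set of integer points of a rational convex polyhedron
`{x : ∀ i, ⟨u i, x⟩ ≤ c i}` intersected with a coset `a + L` of a subgroup `L ≤ ℤ^d` is a
finitely generated module over the affine semigroup of lattice points (in `L`) of the
recession cone `{x : ∀ i, ⟨u i, x⟩ ≤ 0}`. -/
theorem polyhedron_coset_points_isFGModule {d n : ℕ}
    (u : Fin n → Fin d → ℤ) (c : Fin n → ℤ)
    (L : AddSubgroup (Fin d → ℤ)) (a : Fin d → ℤ) :
    ∃ A : AddSubmonoid (Fin d → ℤ),
      (A : Set (Fin d → ℤ)) = {p : Fin d → ℤ | p ∈ L ∧ ∀ i, ∑ j, u i j * p j ≤ 0} ∧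
      ∃ F : Set (Fin d → ℤ), F.Finite ∧
        {p : Fin d → ℤ | p ∈ a +ᵥ (L : Set (Fin d → ℤ)) ∧ ∀ i, ∑ j, u i j * p j ≤ c i}
          = F + (A : Set (Fin d → ℤ)) := by
  classical
  -- the affine semigroup
  refine ⟨{ carrier := {p : Fin d → ℤ | p ∈ L ∧ ∀ i, ∑ j, u i j * p j ≤ 0}
            zero_mem' := ⟨L.zero_mem, fun i => by simp⟩
            add_mem' := ?_ }, rfl, ?_⟩
  · rintro p q ⟨hpL, hp⟩ ⟨hqL, hq⟩
    refine ⟨L.add_mem hpL hqL, fun i => ?_⟩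
    have : ∑ j, u i j * (p j + q j) = (∑ j, u i j * p j) + ∑ j, u i j * q j := by
      rw [← Finset.sum_add_distrib]; exact Finset.sum_congr rfl fun j _ => mul_add _ _ _
    simp only [Pi.add_apply, this]
    have := add_le_add (hp i) (hq i); simpa using this
  -- the polyhedron points set
  set S : Set (Fin d → ℤ) :=
    {p : Fin d → ℤ | p ∈ a +ᵥ (L : Set (Fin d → ℤ)) ∧ ∀ i, ∑ j, u i j * p j ≤ c i} with hSdef
  -- slack function
  set sl : (Fin d → ℤ) → (Fin n → ℕ) := fun p i => (c i - ∑ j, u i j * p j).toNat with hsl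
  have hslval : ∀ p ∈ S, ∀ i, (sl p i : ℤ) = c i - ∑ j, u i j * p j := by
    intro p hp i
    exact Int.toNat_of_nonneg (by linarith [hp.2 i])
  obtain ⟨B, hBT, hBfin, hBdom⟩ := dickson_basis (sl '' S)
  -- choose preimages
  have hchoice : ∀ b ∈ B, ∃ p ∈ S, sl p = b := fun b hb => by
    obtain ⟨p, hp, hpb⟩ := hBT hb; exact ⟨p, hp, hpb⟩
  choose g hgS hgsl using hchoice
  set F : Set (Fin d → ℤ) := {x | ∃ b : B, g b b.2 = x} with hF
  have hFfin : F.Finite := by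
    have hFr : F = Set.range (fun b : B => g b b.2) := by
      ext x; simp [hF]
    haveI := hBfin.to_subtype
    rw [hFr]
    exact Set.finite_range _
  have hFS : F ⊆ S := by rintro x ⟨b, rfl⟩; exact hgS b b.2
  refine ⟨F, hFfin, ?_⟩
  ext p
  simp only [Set.mem_add, SetLike.mem_coe]
  constructor
  · intro hp
    have hmem : sl p ∈ sl '' S := ⟨p, hp, rfl⟩
    obtain ⟨b, hb, hble⟩ := hBdom _ hmem
    set f := g b hb with hf
    have hfS : f ∈ S := hgS b hb
    have hfsl : sl f = b := hgsl b hb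
    refine ⟨f, ⟨⟨b, hb⟩, rfl⟩, p - f, ⟨?_, ?_⟩, by abel⟩
    · -- p - f ∈ L
      obtain ⟨l, hlL, hpl⟩ := hp.1
      obtain ⟨l', hl'L, hfl⟩ := hfS.1
      have : p - f = l - l' := by
        simp only [← hpl, ← hfl, vadd_eq_add]; abel
      rw [this]; exact L.sub_mem hlL hl'L
    · intro i
      have h1 : (sl f i : ℤ) = c i - ∑ j, u i j * f j := hslval f hfS i
      have h2 : (sl p i : ℤ) = c i - ∑ j, u i j * p j := hslval p hp i
      have h3 : (sl f i : ℤ) ≤ sl p i := by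
        rw [hfsl]; exact_mod_cast hble i
      have : ∑ j, u i j * (p j - f j) = (∑ j, u i j * p j) - ∑ j, u i j * f j := by
        rw [← Finset.sum_sub_distrib]; exact Finset.sum_congr rfl fun j _ => mul_sub _ _ _
      simp only [Pi.sub_apply, this]
      linarith
  · rintro ⟨f, hfF, q, ⟨hqL, hq⟩, rfl⟩
    have hfS : f ∈ S := hFS hfF
    constructor
    · obtain ⟨l, hlL, hfl⟩ := hfS.1
      exact ⟨l + q, L.add_mem hlL hqL, by simp only [← hfl, vadd_eq_add]; abel⟩
    · intro i
      have : ∑ j, u i j * (f j + q j) = (∑ j, u i j * f j) + ∑ j, u i j * q j := by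
        rw [← Finset.sum_add_distrib]; exact Finset.sum_congr rfl fun j _ => mul_add _ _ _
      simp only [Pi.add_apply, this]
      linarith [hfS.2 i, hq i]
end
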